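/- arXiv:2403.10525 — 2 statements merged into one kernel-verified Lean document; each statement's English description precedes it below -/
import Mathlib

section
/- Let R be a ring and suppose there is a short exact sequence 0 → M → W → M → 0 of R-modules with W injective. If M has finite injective dimension, then M is injective. -/
open CategoryTheory Opposite Limits

/-- Exactness characterization for cochain complexes of `ℤ`-modules. -/
private lemma myExactAtIff (K : CochainComplex (ModuleCat ℤ) ℕ) (n : ℕ) :
    K.ExactAt (n+1) ↔ ∀ α : K.X (n+1), K.d (n+1) (n+2) α = 0 → ∃ β : K.X n, K.d n (n+1) β = α := by
  rw [K.exactAt_iff' n (n+1) (n+2) (by simp) (by simp)]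
  exact ShortComplex.moduleCat_exact_iff _

variable {R : Type} [Ring R]

/-- The Hom complex `Hom(P, W)` is exact in positive degrees when `W` is injective. -/
private lemma exactAt_of_injective {Z : ModuleCat.{0} R} (P : ProjectiveResolution Z)
    {W : Type} [AddCommGroup W] [Module R W] (hW : Module.Injective R W) (n : ℕ) :
    (P.complex.linearYonedaObj ℤ (ModuleCat.of R W)).ExactAt (n+1) := by
  rw [myExactAtIff]
  show ∀ α : (P.complex.X (n+1) ⟶ ModuleCat.of R W), P.complex.d (n+2) (n+1) ≫ α = 0 →
    ∃ β : (P.complex.X n ⟶ ModuleCat.of R W), P.complex.d (n+1) n ≫ β = α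
  intro α hα
  set d : P.complex.X (n+1) ⟶ P.complex.X n := P.complex.d (n+1) n with hd
  have hrk : LinearMap.range (P.complex.d (n+2) (n+1)).hom = LinearMap.ker d.hom :=
    (P.exact_succ n).moduleCat_range_eq_ker
  have hαz : ∀ x, α (P.complex.d (n+2) (n+1) x) = 0 := by
    intro x
    exact congrArg (fun (h : P.complex.X (n+2) ⟶ ModuleCat.of R W) => h x) hα
  have hle : LinearMap.ker d.hom ≤ LinearMap.ker α.hom := by
    intro x hx
    rw [← hrk] at hx
    obtain ⟨y, rfl⟩ := hx
    exact hαz y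
  set φ : LinearMap.range d.hom →ₗ[R] W :=
    (Submodule.liftQ (LinearMap.ker d.hom) α.hom hle).comp d.hom.quotKerEquivRange.symm.toLinearMap with hφ
  obtain ⟨ψ, hψ⟩ := hW.out (LinearMap.range d.hom).subtype Subtype.val_injective φ
  refine ⟨ModuleCat.ofHom ψ, ?_⟩
  ext x
  show ψ (d x) = α x
  have h1 : ψ (d x) = φ ⟨d x, LinearMap.mem_range_self d.hom x⟩ := hψ ⟨d x, LinearMap.mem_range_self d.hom x⟩
  have h2 : d.hom.quotKerEquivRange (Submodule.Quotient.mk x) = ⟨d x, LinearMap.mem_range_self d.hom x⟩ :=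
    Subtype.ext (d.hom.quotKerEquivRange_apply_mk x)
  have h3 : φ ⟨d x, LinearMap.mem_range_self d.hom x⟩ = α x := by
    rw [hφ]
    show Submodule.liftQ _ _ hle (d.hom.quotKerEquivRange.symm ⟨d x, _⟩) = α x
    rw [← h2, LinearEquiv.symm_apply_apply, Submodule.liftQ_apply]
  rw [h1, h3]

/-- Postcomposition chain map between `linearYonedaObj` complexes. -/
private noncomputable def postComp (X : ChainComplex (ModuleCat.{0} R) ℕ)
    {Y Y' : ModuleCat.{0} R} (φ : Y ⟶ Y') : X.linearYonedaObj ℤ Y ⟶ X.linearYonedaObj ℤ Y' where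
  f i := ((linearYoneda ℤ (ModuleCat.{0} R)).map φ).app (op (X.X i))
  comm' i j _ := by
    ext α
    show (X.d j i ≫ α) ≫ φ = X.d j i ≫ (α ≫ φ)
    exact Category.assoc _ _ _

section
variable {M W : Type} [AddCommGroup M] [Module R M] [AddCommGroup W] [Module R W]
    (f : M →ₗ[R] W) (g : W →ₗ[R] M)
    (hf : Function.Injective f) (hg : Function.Surjective g)
    (hfg : Function.Exact f g)

include hfg in
/-- The short complex of Hom complexes `Hom(P,M) → Hom(P,W) → Hom(P,M)`. -/
private noncomputable def homSES {Z : ModuleCat.{0} R} (P : ProjectiveResolution Z) :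
    ShortComplex (CochainComplex (ModuleCat ℤ) ℕ) :=
  ShortComplex.mk (postComp P.complex (ModuleCat.ofHom f)) (postComp P.complex (ModuleCat.ofHom g))
    (by
      ext i α
      show ((show P.complex.X i ⟶ ModuleCat.of R M from α) ≫ ModuleCat.ofHom f) ≫ ModuleCat.ofHom g = 0
      rw [Category.assoc]
      have : ModuleCat.ofHom f ≫ ModuleCat.ofHom g = 0 := by
        ext m
        exact hfg.apply_apply_eq_zero m
      rw [this, Limits.comp_zero])

include hf hg in
private lemma homSES_shortExact {Z : ModuleCat.{0} R} (P : ProjectiveResolution Z) :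
    (homSES f g hfg P).ShortExact := by
  apply HomologicalComplex.shortExact_of_degreewise_shortExact
  intro i
  have hgepi : Epi (ModuleCat.ofHom g) := (ModuleCat.epi_iff_surjective _).2 hg
  set S := (homSES f g hfg P).map (HomologicalComplex.eval (ModuleCat ℤ) (ComplexShape.up ℕ) i) with hS
  have hmono : Mono S.f := by
    rw [ModuleCat.mono_iff_injective]
    intro α₁ α₂ h
    have h2 : ∀ x, f ((show P.complex.X i ⟶ ModuleCat.of R M from α₁) x)
        = f ((show P.complex.X i ⟶ ModuleCat.of R M from α₂) x) := by
      intro x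
      exact congrArg (fun (k : P.complex.X i ⟶ ModuleCat.of R W) => k x) h
    exact ModuleCat.hom_ext (LinearMap.ext (fun x => hf (h2 x)))
  have hepi : Epi S.g := by
    rw [ModuleCat.epi_iff_surjective]
    intro α
    refine ⟨Projective.factorThru (show P.complex.X i ⟶ ModuleCat.of R M from α)
      (ModuleCat.ofHom g), ?_⟩
    show Projective.factorThru (show P.complex.X i ⟶ ModuleCat.of R M from α)
      (ModuleCat.ofHom g) ≫ ModuleCat.ofHom g = _
    exact Projective.factorThru_comp _ _
  have hexact : S.Exact := by
    rw [ShortComplex.moduleCat_exact_iff]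
    show ∀ β : (P.complex.X i ⟶ ModuleCat.of R W), β ≫ ModuleCat.ofHom g = 0 →
      ∃ α : (P.complex.X i ⟶ ModuleCat.of R M), α ≫ ModuleCat.ofHom f = β
    intro β hβ
    have hmem : ∀ x, β x ∈ LinearMap.range f := by
      intro x
      have : g (β x) = 0 := congrArg (fun (h : P.complex.X i ⟶ ModuleCat.of R M) => h x) hβ
      exact LinearMap.mem_range.2 ((hfg _).1 this)
    set e : M ≃ₗ[R] LinearMap.range f := LinearEquiv.ofInjective f hf with he
    have heval : ∀ v : LinearMap.range f, f (e.symm v) = v := by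
      intro v
      conv_rhs => rw [← e.apply_symm_apply v]
      rfl
    refine ⟨ModuleCat.ofHom (e.symm.toLinearMap ∘ₗ LinearMap.codRestrict (LinearMap.range f)
      β.hom hmem), ?_⟩
    ext x
    exact heval ⟨β x, hmem x⟩
  exact ShortComplex.ShortExact.mk hexact

include hf hg hfg in
/-- Dimension shifting: `Ext^{i+1}(Z,M) = 0 → Ext^i(Z,M) = 0` for `i ≥ 1`. -/
private lemma ext_shift (hW : Module.Injective R W) (Z : ModuleCat.{0} R) (n : ℕ)
    (h : IsZero (((Ext ℤ (ModuleCat.{0} R) (n+2)).obj (op Z)).obj (ModuleCat.of R M))) :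
    IsZero (((Ext ℤ (ModuleCat.{0} R) (n+1)).obj (op Z)).obj (ModuleCat.of R M)) := by
  obtain ⟨P⟩ : Nonempty (ProjectiveResolution Z) := HasProjectiveResolution.out
  set S := homSES f g hfg P with hSdef
  have hSE : S.ShortExact := homSES_shortExact f g hf hg hfg P
  have hrel : (ComplexShape.up ℕ).Rel (n+1) (n+2) := by simp
  have hex := hSE.homology_exact₃ (n+1) (n+2) hrel
  have h2 : IsZero (HomologicalComplex.homology S.X₂ (n+1)) := by
    rw [← HomologicalComplex.exactAt_iff_isZero_homology]
    exact exactAt_of_injective P hW n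
  have h1 : IsZero (HomologicalComplex.homology S.X₁ (n+2)) :=
    IsZero.of_iso h (P.isoExt (n+2) (ModuleCat.of R M)).symm
  have hzero_map : HomologicalComplex.homologyMap S.g (n+1) = 0 := h2.eq_of_src _ _
  haveI : Mono (hSE.δ (n+1) (n+2) hrel) := hex.mono_g hzero_map
  have h3 : IsZero (HomologicalComplex.homology S.X₃ (n+1)) :=
    IsZero.of_mono (hSE.δ (n+1) (n+2) hrel) h1
  exact IsZero.of_iso h3 (P.isoExt (n+1) (ModuleCat.of R M))

end

/-- If `Ext^1(Z, M) = 0` for all `Z`, then every embedding of `M` splits. -/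
private lemma retract_of_ext1 {M : Type} [AddCommGroup M] [Module R M]
    (hz : ∀ Z : ModuleCat.{0} R,
      IsZero (((Ext ℤ (ModuleCat.{0} R) 1).obj (op Z)).obj (ModuleCat.of R M)))
    {J : Type} [AddCommGroup J] [Module R J] (u : M →ₗ[R] J) (hu : Function.Injective u) :
    ∃ r : J →ₗ[R] M, ∀ m, r (u m) = m := by
  classical
  set Z : ModuleCat.{0} R := ModuleCat.of R (J ⧸ LinearMap.range u) with hZ
  set X : ModuleCat.{0} R := ModuleCat.of R J with hX
  set q : X ⟶ Z := ModuleCat.ofHom (LinearMap.range u).mkQ with hq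
  have hqsurj : Function.Surjective q := Submodule.mkQ_surjective _
  have : Epi q := (ModuleCat.epi_iff_surjective q).2 hqsurj
  obtain ⟨P⟩ : Nonempty (ProjectiveResolution Z) := HasProjectiveResolution.out
  set π₀ : P.complex.X 0 ⟶ Z := P.π.f 0 with hπ₀
  set ε : P.complex.X 0 ⟶ X := Projective.factorThru π₀ q with hε
  have hεq : ε ≫ q = π₀ := Projective.factorThru_comp _ _
  set d1 : P.complex.X 1 ⟶ P.complex.X 0 := P.complex.d 1 0 with hd1
  have hd1π : ∀ x, π₀ (d1 x) = 0 := by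
    intro x
    exact congrArg (fun (h : P.complex.X 1 ⟶ Z) => h x) P.complex_d_comp_π_f_zero
  have hmem : ∀ x, ε (d1 x) ∈ LinearMap.range u := by
    intro x
    have h1 : q (ε (d1 x)) = 0 := by
      have := congrArg (fun (h : P.complex.X 1 ⟶ Z) => h x)
        (show d1 ≫ ε ≫ q = 0 by rw [hεq]; exact P.complex_d_comp_π_f_zero)
      exact this
    simpa using (Submodule.Quotient.mk_eq_zero _).1 h1
  set e : M ≃ₗ[R] LinearMap.range u := LinearEquiv.ofInjective u hu with he
  have heval : ∀ v : LinearMap.range u, u (e.symm v) = v := by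
    intro v
    conv_rhs => rw [← e.apply_symm_apply v]
    rfl
  set α : P.complex.X 1 ⟶ ModuleCat.of R M :=
    ModuleCat.ofHom (e.symm.toLinearMap ∘ₗ LinearMap.codRestrict (LinearMap.range u)
      (LinearMap.comp ε.hom d1.hom) hmem) with hα
  have hαu : ∀ x, u (α x) = ε (d1 x) := fun x => heval _
  set K := P.complex.linearYonedaObj ℤ (ModuleCat.of R M) with hK
  have hc : (K.d 1 2) α = 0 := by
    show P.complex.d 2 1 ≫ α = 0
    ext x
    apply hu
    show u (α (P.complex.d 2 1 x)) = u 0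
    rw [hαu, map_zero]
    have : d1 (P.complex.d 2 1 x) = 0 := by
      have := congrArg (fun (h : P.complex.X 2 ⟶ P.complex.X 0) => h x)
        (P.complex.d_comp_d 2 1 0)
      exact this
    rw [this, map_zero]
  have hH1 : IsZero (K.homology 1) :=
    IsZero.of_iso (hz Z) (P.isoExt 1 (ModuleCat.of R M)).symm
  have hKex : K.ExactAt 1 := (HomologicalComplex.exactAt_iff_isZero_homology _ _).2 hH1
  obtain ⟨β₀, hβ₀⟩ := (myExactAtIff K 0).1 hKex α hc
  set β : P.complex.X 0 ⟶ ModuleCat.of R M := β₀ with hβdef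
  have hβ : d1 ≫ β = α := hβ₀
  have hβ' : ∀ x, β (d1 x) = α x := by
    intro x
    exact congrArg (fun (h : P.complex.X 1 ⟶ ModuleCat.of R M) => h x) hβ
  set uh : ModuleCat.of R M ⟶ X := ModuleCat.ofHom u with huh
  set τ : P.complex.X 0 ⟶ X := ε - (β ≫ uh) with hτdef
  have hτ : ∀ x, x ∈ LinearMap.ker π₀.hom → τ x = 0 := by
    intro x hx
    have : x ∈ LinearMap.range d1.hom := by
      rw [P.exact₀.moduleCat_range_eq_ker]
      exact hx
    obtain ⟨y, rfl⟩ := this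
    have hαu' : ∀ x, uh (α x) = ε (d1 x) := hαu
    show ε (d1 y) - uh (β (d1 y)) = 0
    rw [hβ' y, hαu' y, sub_self]
  have hπsurj : Function.Surjective π₀ := (ModuleCat.epi_iff_surjective π₀).1 (show Epi (P.π.f 0) from inferInstance)
  set e2 := LinearMap.quotKerEquivOfSurjective π₀.hom hπsurj with he2
  have hle : LinearMap.ker π₀.hom ≤ LinearMap.ker τ.hom := fun x hx => hτ x hx
  set γ : Z →ₗ[R] J :=
    (Submodule.liftQ (LinearMap.ker π₀.hom) τ.hom hle).comp e2.symm.toLinearMap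
    with hγdef
  have he2mk : ∀ p, e2 (Submodule.Quotient.mk p) = π₀ p := by
    intro p
    simp [he2, LinearMap.quotKerEquivOfSurjective]
  have hγ : ∀ p, γ (π₀ p) = τ p := by
    intro p
    have : e2.symm (π₀ p) = Submodule.Quotient.mk p := by
      rw [← he2mk p, LinearEquiv.symm_apply_apply]
    show Submodule.liftQ _ _ hle (e2.symm (π₀ p)) = τ p
    rw [this, Submodule.liftQ_apply]
  have hsec : ∀ z : Z, q (γ z) = z := by
    intro z
    obtain ⟨p, rfl⟩ := hπsurj z
    rw [hγ]
    show q (ε p - uh (β p)) = π₀ p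
    rw [map_sub]
    have h1 : q (ε p) = π₀ p := congrArg (fun (h : P.complex.X 0 ⟶ Z) => h p) hεq
    have h2 : q (uh (β p)) = 0 := (Submodule.Quotient.mk_eq_zero _).2 ⟨β p, rfl⟩
    rw [h1, h2, sub_zero]
  have hmem2 : ∀ x : J, x - γ (q x) ∈ LinearMap.range u := by
    intro x
    have : q (x - γ (q x)) = 0 := by rw [map_sub, hsec, sub_self]
    simpa using (Submodule.Quotient.mk_eq_zero _).1 this
  refine ⟨e.symm.toLinearMap ∘ₗ LinearMap.codRestrict (LinearMap.range u)
    (LinearMap.id - γ ∘ₗ q.hom) hmem2, ?_⟩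
  intro m
  apply hu
  show u (e.symm ⟨u m - γ (q (u m)), _⟩) = u m
  rw [heval]
  have : q (u m) = 0 := (Submodule.Quotient.mk_eq_zero _).2 ⟨m, rfl⟩
  show u m - γ (q (u m)) = u m
  rw [this, map_zero, sub_zero]

/-- The `i`-th Ext group (as a `ℤ`-module) in the category of `R`-modules. -/
noncomputable def extGroup (R : Type) [Ring R] (i : ℕ) (Z M : ModuleCat.{0} R) :
    ModuleCat ℤ :=
  ((Ext ℤ (ModuleCat.{0} R) i).obj (op Z)).obj M

/-- `M` has injective dimension at most `n`: `Ext^i(Z, M) = 0` for all `i > n`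
and all modules `Z`. -/
def injDimLE (R : Type) [Ring R] (M : ModuleCat.{0} R) (n : ℕ) : Prop :=
  ∀ (Z : ModuleCat.{0} R) (i : ℕ), n < i → Limits.IsZero (extGroup R i Z M)

/-- If `0 → M → W → M → 0` is a short exact sequence of `R`-modules with `W` injective,
and `M` has finite injective dimension, then `M` is injective. -/
theorem stmt2 (R : Type) [Ring R]
    (M W : Type) [AddCommGroup M] [Module R M] [AddCommGroup W] [Module R W]
    (f : M →ₗ[R] W) (g : W →ₗ[R] M)
    (hf : Function.Injective f) (hg : Function.Surjective g)
    (hfg : Function.Exact f g)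
    (hW : Module.Injective R W)
    (hfin : ∃ n : ℕ, injDimLE R (ModuleCat.of R M) n) :
    Module.Injective R M := by
  obtain ⟨n, hn⟩ := hfin
  have key : ∀ Z : ModuleCat.{0} R,
      IsZero (((Ext ℤ (ModuleCat.{0} R) 1).obj (op Z)).obj (ModuleCat.of R M)) := by
    intro Z
    have H : ∀ m i, 1 ≤ i → n < i + m →
        IsZero (((Ext ℤ (ModuleCat.{0} R) i).obj (op Z)).obj (ModuleCat.of R M)) := by
      intro m
      induction m with
      | zero =>
        intro i h1 h2
        exact hn Z i (by omega)
      | succ m ih =>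
        intro i h1 h2
        by_cases hc : n < i
        · exact hn Z i hc
        · obtain ⟨k, rfl⟩ : ∃ k, i = k + 1 := ⟨i - 1, by omega⟩
          exact ext_shift f g hf hg hfg hW Z k (ih (k + 2) (by omega) (by omega))
    exact H (n + 1) 1 le_rfl (by omega)
  -- embed M into an injective module and split
  let J : ModuleCat.{0} R := Injective.under (ModuleCat.of R M)
  have hJi : CategoryTheory.Injective (ModuleCat.of R (J : Type)) :=
    inferInstanceAs (CategoryTheory.Injective J)
  have hJ : Module.Injective R (J : Type) := Module.injective_module_of_injective_object R _
  set u : M →ₗ[R] (J : Type) := (Injective.ι (ModuleCat.of R M) : ModuleCat.of R M ⟶ J).hom with hu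
  have huinj : Function.Injective u :=
    (ModuleCat.mono_iff_injective (Injective.ι (ModuleCat.of R M))).1 inferInstance
  obtain ⟨r, hr⟩ := retract_of_ext1 key u huinj
  refine ⟨fun X Y _ _ _ _ i hi φ => ?_⟩
  obtain ⟨ψ, hψ⟩ := hJ.out i hi (u ∘ₗ φ)
  refine ⟨r ∘ₗ ψ, fun x => ?_⟩
  show r (ψ (i x)) = φ x
  rw [hψ x]
  show r (u (φ x)) = φ x
  exact hr (φ x)
end

section
/- Let R be a ring and let P_• be an exact (acyclic) unbounded complex of projective R-modules such that Hom(P_•, N) is exact for every R-module N. Then every cycle module Z_m(P_•) is projective, and each short exact sequence 0 → Z_m(P_•) → P_m → Z_{m-1}(P_•) → 0 splits. -/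
/-- Let `P` be an exact unbounded complex of projective `R`-modules
(`d i : P i → P (i-1)`), such that `Hom(P_•, N)` is exact for every `R`-module `N`.
Then every cycle module `Z_m = ker (d m)` is projective, and each short exact sequence
`0 → Z_m → P_m → Z_{m-1} → 0` splits. -/
theorem stmt8 (R : Type) [Ring R]
    (P : ℤ → Type) [∀ i, AddCommGroup (P i)] [∀ i, Module R (P i)]
    (hproj : ∀ i, Module.Projective R (P i))
    (d : ∀ i : ℤ, P i →ₗ[R] P (i - 1))
    (hexact : ∀ i : ℤ, Function.Exact (d i) (d (i - 1)))
    (hhom : ∀ (N : Type) (_ : AddCommGroup N) (_ : Module R N) (i : ℤ),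
      Function.Exact
        (fun g : P (i - 1 - 1) →ₗ[R] N => g ∘ₗ d (i - 1))
        (fun g : P (i - 1) →ₗ[R] N => g ∘ₗ d i)) :
    ∀ m : ℤ,
      Module.Projective R (LinearMap.ker (d m)) ∧
      ∃ r : P m →ₗ[R] LinearMap.ker (d m),
        ∀ x : LinearMap.ker (d m), r (x : P m) = x := by
  intro m
  obtain ⟨i, rfl⟩ : ∃ i : ℤ, m = i - 1 - 1 := ⟨m + 2, by ring⟩
  set Z := LinearMap.ker (d (i - 1 - 1)) with hZ
  have hmem : ∀ x : P (i - 1), d (i - 1) x ∈ Z := fun x =>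
    LinearMap.mem_ker.mpr ((hexact (i - 1)).apply_apply_eq_zero x)
  let g : P (i - 1) →ₗ[R] Z := (d (i - 1)).codRestrict Z hmem
  have hg0 : (fun g' : P (i - 1) →ₗ[R] Z => g' ∘ₗ d i) g = 0 := by
    ext x
    exact (hexact i).apply_apply_eq_zero x
  obtain ⟨h, hh⟩ := ((hhom Z inferInstance inferInstance i) g).mp hg0
  have key : ∀ x : Z, h (x : P (i - 1 - 1)) = x := by
    intro x
    obtain ⟨y, hy⟩ := ((hexact (i - 1)) (x : P (i - 1 - 1))).mp x.2
    have : h ((d (i - 1)) y) = g y := by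
      have := congrArg (fun f : P (i - 1) →ₗ[R] Z => f y) hh
      simpa using this
    rw [← hy, this]
    exact Subtype.ext hy
  refine ⟨Module.Projective.of_split Z.subtype h ?_, ⟨h, key⟩⟩
  ext x
  exact congrArg Subtype.val (key x)
end
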